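/- Let λ, μ be real numbers and h > 0, and set a = 1 + (3/2)λh, b = μ√h, c = −λh/2. Then the conditions [0 ≤ c < 1, |a| < 1 − c, b²(1−c) < (1+c)((1−c)² − a²)] hold if and only if −1 < λh < 0 and μ² < 2λ(λh − 2)(λh + 1)/(λh + 2). -/

import Mathlib

/-- The real-coefficient mean-square stability conditions of AB2 characterize the
stability region `R_AB2(h)`. -/
theorem stmt_13 (lam mu h : ℝ) (hh : 0 < h)
    (a b c : ℝ) (ha : a = 1 + (3 / 2) * lam * h) (hb : b = mu * Real.sqrt h)
    (hc : c = -(lam * h) / 2) :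
    (0 ≤ c ∧ c < 1 ∧ |a| < 1 - c ∧ b ^ 2 * (1 - c) < (1 + c) * ((1 - c) ^ 2 - a ^ 2)) ↔
      (-1 < lam * h ∧ lam * h < 0 ∧
        mu ^ 2 < 2 * lam * (lam * h - 2) * (lam * h + 1) / (lam * h + 2)) := by
  subst ha hb hc
  have hs : Real.sqrt h ^ 2 = h := Real.sq_sqrt hh.le
  constructor
  · rintro ⟨h1, h2, h3, h4⟩
    rw [abs_lt] at h3
    obtain ⟨h3a, h3b⟩ := h3
    have hx0 : lam * h < 0 := by nlinarith
    have hx1 : -1 < lam * h := by nlinarith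
    refine ⟨hx1, hx0, ?_⟩
    rw [lt_div_iff₀ (by linarith : (0:ℝ) < lam * h + 2)]
    rw [mul_pow, hs] at h4
    have key : mu ^ 2 * h * (lam * h + 2) < 2 * (lam * h) * (lam * h - 2) * (lam * h + 1) := by
      nlinarith [h4]
    rw [← mul_lt_mul_iff_left₀ hh]
    nlinarith [key]
  · rintro ⟨hx1, hx0, h4⟩
    rw [lt_div_iff₀ (by linarith : (0:ℝ) < lam * h + 2)] at h4
    refine ⟨by linarith, by linarith, ?_, ?_⟩
    · rw [abs_lt]; constructor <;> nlinarith
    · have key : mu ^ 2 * (lam * h + 2) * h < 2 * lam * (lam * h - 2) * (lam * h + 1) * h := by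
        exact (mul_lt_mul_iff_left₀ hh).mpr h4
      rw [mul_pow, hs]
      nlinarith [key]
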